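/- The polynomials r_n(q) = ∑_{h=0}^{n} q^{n-h} [n choose h]_q satisfy the recurrence r_n(q) = (1+q) r_{n-1}(q) + (q^n - q) r_{n-2}(q) for n ≥ 2, with r_0(q) = 1 and r_1(q) = 1 + q. -/
import Mathlib


open Finset Polynomial

/-- The Gaussian (q-)binomial coefficient `[n choose k]_q` as a polynomial in `q`. -/
noncomputable def qbinom : ℕ → ℕ → Polynomial ℤ
  | _, 0 => 1
  | 0, _ + 1 => 0
  | n + 1, k + 1 => qbinom n k + Polynomial.X ^ (k + 1) * qbinom n (k + 1)

lemma qbinom_zero (n : ℕ) : qbinom n 0 = 1 := by cases n <;> rfl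

lemma qbinom_eq_zero : ∀ n k : ℕ, n < k → qbinom n k = 0
  | 0, 0, h => absurd h (lt_irrefl 0)
  | 0, k+1, _ => rfl
  | n+1, 0, h => absurd h (by omega)
  | n+1, k+1, h => by
    show qbinom n k + Polynomial.X ^ (k + 1) * qbinom n (k + 1) = 0
    rw [qbinom_eq_zero n k (by omega), qbinom_eq_zero n (k+1) (by omega)]
    ring

lemma qbinom_pascal' : ∀ n k : ℕ, qbinom (n+1) (k+1) =
    Polynomial.X ^ (n - k) * qbinom n k + qbinom n (k+1)
  | 0, 0 => by simp [qbinom]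
  | 0, k+1 => by simp [qbinom, qbinom_eq_zero 0 (k+1) (by omega),
      qbinom_eq_zero 0 (k+2) (by omega)]
  | n+1, 0 => by
    show qbinom (n+1) 0 + Polynomial.X ^ 1 * qbinom (n+1) 1 =
      Polynomial.X ^ (n + 1 - 0) * qbinom (n+1) 0 + qbinom (n+1) 1
    nth_rewrite 1 [qbinom_pascal' n 0]
    rw [show qbinom (n+1) 1 = qbinom n 0 + Polynomial.X ^ 1 * qbinom n 1 from rfl,
      qbinom_zero, qbinom_zero]
    simp only [Nat.sub_zero, pow_one, pow_zero, mul_one, one_mul]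
    rw [pow_succ]
    ring
  | n+1, j+1 => by
    show qbinom (n+1) (j+1) + Polynomial.X ^ (j + 2) * qbinom (n+1) (j+2) =
      Polynomial.X ^ (n + 1 - (j+1)) * qbinom (n+1) (j+1) + qbinom (n+1) (j+2)
    rw [show n + 1 - (j+1) = n - j from by omega]
    conv_lhs => rw [qbinom_pascal' n j, qbinom_pascal' n (j+1)]
    conv_rhs => rw [show qbinom (n+1) (j+1) = qbinom n j + Polynomial.X ^ (j+1) * qbinom n (j+1) from rfl,
      show qbinom (n+1) (j+2) = qbinom n (j+1) + Polynomial.X ^ (j+2) * qbinom n (j+2) from rfl]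
    rcases le_or_gt (j+1) n with hle | hlt
    · rw [mul_add, mul_add, ← mul_assoc, ← mul_assoc, ← pow_add, ← pow_add,
        show j + 2 + (n - (j+1)) = n - j + (j+1) from by omega]
      ring
    · rw [qbinom_eq_zero n (j+1) hlt, qbinom_eq_zero n (j+2) (by omega),
        show n - j = 0 from by omega]
      ring

noncomputable def Rq (n : ℕ) : Polynomial ℤ :=
  ∑ h ∈ Finset.range (n+1), Polynomial.X ^ (n - h) * qbinom n h

noncomputable def Sq (n : ℕ) : Polynomial ℤ :=
  ∑ h ∈ Finset.range (n+1), qbinom n h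

lemma shift_sum (n : ℕ) :
    ∑ h ∈ Finset.range (n+1), qbinom n (h+1) = Sq n - 1 := by
  have h1 := Finset.sum_range_succ' (fun h => qbinom n h) (n+1)
  have h2 : ∑ h ∈ Finset.range (n+2), qbinom n h = Sq n := by
    rw [Finset.sum_range_succ, qbinom_eq_zero n (n+1) (by omega)]
    simp [Sq]
  rw [h2, qbinom_zero] at h1
  linear_combination -h1

lemma Sq_succ (n : ℕ) : Sq (n+1) = Rq n + Sq n := by
  unfold Sq
  rw [Finset.sum_range_succ', qbinom_zero]
  rw [Finset.sum_congr rfl (fun h _ => qbinom_pascal' n h), Finset.sum_add_distrib,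
    shift_sum]
  unfold Rq Sq
  ring

lemma Rq_succ (n : ℕ) : Rq (n+1) = Rq n + Polynomial.X ^ (n+1) * Sq n := by
  unfold Rq
  rw [Finset.sum_range_succ']
  simp only [Nat.succ_sub_succ_eq_sub, Nat.sub_zero]
  rw [qbinom_zero]
  have key : ∀ h ∈ Finset.range (n+1),
      Polynomial.X ^ (n - h) * qbinom (n+1) (h+1)
      = Polynomial.X ^ (n - h) * qbinom n h + Polynomial.X ^ (n+1) * qbinom n (h+1) := by
    intro h hh
    have hle : h ≤ n := Nat.lt_succ_iff.mp (Finset.mem_range.mp hh)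
    rw [show qbinom (n+1) (h+1) = qbinom n h + Polynomial.X ^ (h+1) * qbinom n (h+1) from rfl,
      mul_add, ← mul_assoc, ← pow_add, show n - h + (h+1) = n+1 from by omega]
  rw [Finset.sum_congr rfl key, Finset.sum_add_distrib, ← Finset.mul_sum, shift_sum]
  ring

/-- The polynomials `r_n(q) = ∑_{h=0}^{n} q^{n-h} [n choose h]_q` satisfy
`r_n = (1+q) r_{n-1} + (q^n - q) r_{n-2}` for `n ≥ 2`, with `r_0 = 1`, `r_1 = 1 + q`. -/
theorem r_recurrence :
    (∑ h ∈ Finset.range 1, (Polynomial.X : Polynomial ℤ) ^ (0 - h) * qbinom 0 h) = 1 ∧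
    (∑ h ∈ Finset.range 2, (Polynomial.X : Polynomial ℤ) ^ (1 - h) * qbinom 1 h) =
      1 + Polynomial.X ∧
    ∀ n, 2 ≤ n →
      (∑ h ∈ Finset.range (n + 1), (Polynomial.X : Polynomial ℤ) ^ (n - h) * qbinom n h) =
        (1 + Polynomial.X) *
            (∑ h ∈ Finset.range n, (Polynomial.X : Polynomial ℤ) ^ (n - 1 - h) * qbinom (n - 1) h) +
          (Polynomial.X ^ n - Polynomial.X) *
            (∑ h ∈ Finset.range (n - 1),
              (Polynomial.X : Polynomial ℤ) ^ (n - 2 - h) * qbinom (n - 2) h) := by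
  refine ⟨by simp [qbinom], by simp [Finset.sum_range_succ, qbinom]; ring, ?_⟩
  intro n hn
  obtain ⟨m, rfl⟩ : ∃ m, n = m + 2 := ⟨n - 2, by omega⟩
  simp only [show m + 2 - 1 = m + 1 from by omega, show m + 2 - 2 = m from by omega]
  show Rq (m+2) = (1 + Polynomial.X) * Rq (m+1) + (Polynomial.X ^ (m+2) - Polynomial.X) * Rq m
  have h1 := Rq_succ (m+1)
  have h2 := Sq_succ m
  have h3 := Rq_succ m
  rw [h2] at h1
  linear_combination h1 - Polynomial.X * h3
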